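/- Let U be an n×n complex unitary matrix with spectral decomposition U = Σ_r e^{iθ_r} F_r, and let x, y be unit vectors in ℂⁿ. If pretty good state transfer occurs from x to y, then x and y are strongly cospectral, i.e., for every r there exists μ_r ∈ ℂ with |μ_r| = 1 and F_r x = μ_r F_r y. -/

import Mathlib

open Matrix Complex Finset

/-- The Euclidean norm of a vector in `ℂⁿ`. -/
noncomputable def euclNorm {ι : Type*} [Fintype ι] (v : ι → ℂ) : ℝ :=
  Real.sqrt (∑ i, ‖v i‖ ^ 2)

/-- The Euclidean inner product `⟨v, w⟩ = ∑ᵢ vᵢ conj(wᵢ)` on `ℂⁿ`. -/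
noncomputable def euclInner {ι : Type*} [Fintype ι] (v w : ι → ℂ) : ℂ :=
  ∑ i, v i * star (w i)

/-- Pretty good state transfer from `x` to `y` under the unitary `U`. -/
def PGST {ι : Type*} [Fintype ι] [DecidableEq ι] (U : Matrix ι ι ℂ) (x y : ι → ℂ) : Prop :=
  ∃ γ : ℂ, ‖γ‖ = 1 ∧ ∀ ε > 0, ∃ t : ℤ, euclNorm ((U ^ t).mulVec x - γ • y) < ε

/-- The identity map to `EuclideanSpace`, as a linear equivalence. -/
noncomputable def eqE {m : ℕ} : (Fin m → ℂ) ≃ₗ[ℂ] EuclideanSpace ℂ (Fin m) :=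
  (WithLp.linearEquiv 2 ℂ (Fin m → ℂ)).symm

lemma euclNorm_eq {m : ℕ} (v : Fin m → ℂ) : euclNorm v = ‖eqE v‖ := by
  rw [EuclideanSpace.norm_eq, euclNorm]
  rfl

lemma inner_eqE {m : ℕ} (a b : Fin m → ℂ) :
    (inner ℂ (eqE a) (eqE b) : ℂ) = star a ⬝ᵥ b := by
  simp only [PiLp.inner_apply, RCLike.inner_apply, dotProduct, Pi.star_apply]
  exact Finset.sum_congr rfl fun i _ => mul_comm _ _

lemma proj_contract {m : ℕ} (P : Matrix (Fin m) (Fin m) ℂ)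
    (hh : Pᴴ = P) (hi : P * P = P) (v : Fin m → ℂ) :
    euclNorm (P *ᵥ v) ≤ euclNorm v := by
  rw [euclNorm_eq, euclNorm_eq]
  set w := P *ᵥ v with hw
  have key : (inner ℂ (eqE w) (eqE w) : ℂ) = inner ℂ (eqE v) (eqE w) := by
    rw [inner_eqE, inner_eqE]
    rw [hw, star_mulVec, hh, ← dotProduct_mulVec, mulVec_mulVec, hi]
  have h1 : ‖eqE w‖ * ‖eqE w‖ ≤ ‖eqE v‖ * ‖eqE w‖ := by
    have e1 : ‖eqE w‖ * ‖eqE w‖ = Complex.re (inner ℂ (eqE w) (eqE w) : ℂ) :=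
      (inner_self_eq_norm_mul_norm (𝕜 := ℂ) (eqE w)).symm
    have e2 : Complex.re (inner ℂ (eqE v) (eqE w) : ℂ) ≤ ‖(inner ℂ (eqE v) (eqE w) : ℂ)‖ :=
      Complex.re_le_norm _
    have e3 : ‖(inner ℂ (eqE v) (eqE w) : ℂ)‖ ≤ ‖eqE v‖ * ‖eqE w‖ :=
      norm_inner_le_norm _ _
    rw [e1, key]
    exact le_trans e2 e3
  rcases eq_or_lt_of_le (norm_nonneg (eqE w)) with h | h
  · rw [← h]; exact norm_nonneg _
  · exact le_of_mul_le_mul_right h1 h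

theorem stmt5 {n : ℕ} {ι : Type*} [Fintype ι]
    (θ : ι → ℝ) (F : ι → Matrix (Fin n) (Fin n) ℂ)
    (hdist : ∀ r s, Complex.exp (θ r * Complex.I) = Complex.exp (θ s * Complex.I) → r = s)
    (hherm : ∀ r, (F r)ᴴ = F r)
    (hidem : ∀ r, F r * F r = F r)
    (horth : ∀ r s, r ≠ s → F r * F s = 0)
    (hsum : ∑ r, F r = 1)
    (U : Matrix (Fin n) (Fin n) ℂ)
    (hU : U = ∑ r, Complex.exp (θ r * Complex.I) • F r)
    (x y : Fin n → ℂ) (hx : euclNorm x = 1) (hy : euclNorm y = 1)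
    (hpgst : PGST U x y) :
    ∀ r, ∃ μ : ℂ, ‖μ‖ = 1 ∧ (F r).mulVec x = μ • (F r).mulVec y := by
  obtain ⟨γ, hγ, hconv⟩ := hpgst
  intro r
  set c : ι → ℂ := fun s => Complex.exp (θ s * Complex.I) with hc
  have hc0 : ∀ s, c s ≠ 0 := fun s => Complex.exp_ne_zero _
  have hcn : ∀ s, ‖c s‖ = 1 := fun s => Complex.norm_exp_ofReal_mul_I (θ s)
  -- F s * U = c s • F s
  have FU : ∀ s, F s * U = c s • F s := by
    intro s
    rw [hU, Finset.mul_sum]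
    rw [Finset.sum_eq_single s (fun t _ hts => by
      rw [Matrix.mul_smul, horth s t (Ne.symm hts), smul_zero]) (fun h => absurd (mem_univ s) h)]
    rw [Matrix.mul_smul, hidem s]
  -- U is invertible
  have hUV : U * (∑ s, (c s)⁻¹ • F s) = 1 := by
    rw [hU, Finset.sum_mul_sum]
    have hterm : ∀ s ∈ (univ : Finset ι),
        (∑ t, (c s • F s) * ((c t)⁻¹ • F t)) = F s := by
      intro s _
      rw [Finset.sum_eq_single s (fun t _ hts => by
        rw [Matrix.smul_mul, Matrix.mul_smul, horth s t (Ne.symm hts), smul_zero, smul_zero])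
        (fun h => absurd (mem_univ s) h)]
      rw [Matrix.smul_mul, Matrix.mul_smul, hidem s, smul_smul,
        mul_inv_cancel₀ (hc0 s), one_smul]
    rw [Finset.sum_congr rfl hterm, hsum]
  have hUnit : IsUnit U :=
    ⟨⟨U, ∑ s, (c s)⁻¹ • F s, hUV, mul_eq_one_comm.mp hUV⟩, rfl⟩
  have hdet : IsUnit U.det := (Matrix.isUnit_iff_isUnit_det U).mp hUnit
  -- powers
  have FUpow : ∀ m : ℕ, F r * U ^ m = (c r) ^ m • F r := by
    intro m
    induction m with
    | zero => simp
    | succ k ih =>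
      rw [pow_succ, ← mul_assoc, ih, Matrix.smul_mul, FU r, smul_smul, ← pow_succ]
  have FUz : ∀ t : ℤ, F r * U ^ t = (c r) ^ t • F r := by
    intro t
    cases t with
    | ofNat m => simpa using FUpow m
    | negSucc m =>
      rw [zpow_negSucc, zpow_negSucc]
      have hpc : (c r) ^ (m + 1) ≠ 0 := pow_ne_zero _ (hc0 r)
      have h2 : U ^ (m + 1) * (U ^ (m + 1))⁻¹ = 1 :=
        Matrix.mul_nonsing_inv _ (by rw [Matrix.det_pow]; exact hdet.pow _)
      have h3 : F r = (c r) ^ (m + 1) • (F r * (U ^ (m + 1))⁻¹) := by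
        have := congrArg (· * (U ^ (m + 1))⁻¹) (FUpow (m + 1))
        simp only [Matrix.smul_mul] at this
        rw [mul_assoc, h2, mul_one] at this
        exact this
      calc F r * (U ^ (m + 1))⁻¹
          = ((c r) ^ (m + 1))⁻¹ • ((c r) ^ (m + 1) • (F r * (U ^ (m + 1))⁻¹)) := by
            rw [smul_smul, inv_mul_cancel₀ hpc, one_smul]
        _ = ((c r) ^ (m + 1))⁻¹ • F r := by rw [← h3]
  have key : ∀ t : ℤ, (F r) *ᵥ ((U ^ t) *ᵥ x) = (c r) ^ t • ((F r) *ᵥ x) := by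
    intro t
    rw [mulVec_mulVec, FUz t, Matrix.smul_mulVec]
  set v := (F r) *ᵥ x with hv
  set w := (F r) *ᵥ y with hw
  set K := (fun μ : ℂ => μ • eqE w) '' Metric.sphere (0 : ℂ) 1 with hK
  have hKc : IsCompact K := (isCompact_sphere 0 1).image (continuous_id.smul continuous_const)
  have hmem : eqE v ∈ closure K := by
    rw [Metric.mem_closure_iff]
    intro ε hε
    obtain ⟨t, ht⟩ := hconv ε hε
    have hct : ‖(c r) ^ t‖ = 1 := by rw [norm_zpow, hcn r, _root_.one_zpow]
    have hct0 : (c r) ^ t ≠ 0 := zpow_ne_zero _ (hc0 r)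
    refine ⟨(((c r) ^ t)⁻¹ * γ) • eqE w, ⟨((c r) ^ t)⁻¹ * γ, ?_, rfl⟩, ?_⟩
    · rw [mem_sphere_zero_iff_norm, norm_mul, norm_inv, hct, hγ, inv_one, one_mul]
    · have hb : euclNorm ((F r) *ᵥ ((U ^ t) *ᵥ x - γ • y)) < ε :=
        lt_of_le_of_lt (proj_contract (F r) (hherm r) (hidem r) _) ht
      have he : (F r) *ᵥ ((U ^ t) *ᵥ x - γ • y) = (c r) ^ t • v - γ • w := by
        rw [mulVec_sub, mulVec_smul, key t, hv, hw]
      rw [he] at hb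
      have he2 : v - (((c r) ^ t)⁻¹ * γ) • w = ((c r) ^ t)⁻¹ • ((c r) ^ t • v - γ • w) := by
        rw [smul_sub, smul_smul, smul_smul, inv_mul_cancel₀ hct0, one_smul]
      have hnorm : euclNorm (v - (((c r) ^ t)⁻¹ * γ) • w) < ε := by
        rw [he2, euclNorm_eq, _root_.map_smul, norm_smul, norm_inv, hct, inv_one, one_mul,
          ← euclNorm_eq]
        exact hb
      rw [dist_eq_norm]
      have : eqE v - (((c r) ^ t)⁻¹ * γ) • eqE w = eqE (v - (((c r) ^ t)⁻¹ * γ) • w) := by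
        rw [map_sub, _root_.map_smul]
      rw [this, ← euclNorm_eq]
      exact hnorm
  rw [hKc.isClosed.closure_eq] at hmem
  obtain ⟨μ, hμs, hμe⟩ := hmem
  refine ⟨μ, ?_, ?_⟩
  · rwa [mem_sphere_zero_iff_norm] at hμs
  · have : eqE v = eqE (μ • w) := by rw [_root_.map_smul]; exact hμe.symm
    exact eqE.injective this
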